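/- Let τ₁, σ₁, τ₂, σ₂ ≥ 0 and ρ₁, ρ₂ ∈ [0, +∞]. Set f = (δ_{τ₁} ⊗ I_{σ₁} ⊗ γ_{0,ρ₁}) ∧ δ_0 and g = (δ_{τ₂} ⊗ I_{σ₂} ⊗ γ_{0,ρ₂}) ∧ δ_0. Then f ⊗ g = f ∧ g ∧ ((δ_{τ₁+τ₂} ⊗ I_{σ₁+σ₂} ⊗ γ_{0,ρ₁}) ∧ δ_0) ∧ ((δ_{τ₁+τ₂} ⊗ I_{σ₁+σ₂} ⊗ γ_{0,ρ₂}) ∧ δ_0). In particular, the convolution of two MSLC curves with a single step each is again an MSLC curve. -/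

import Mathlib

open scoped ENNReal
open Classical

noncomputable section

/-- Burst-delay function `δ_T`: `0` for `t ≤ T`, `+∞` for `t > T`. -/
def bdelay (T : ℝ) : ℝ → ℝ≥0∞ := fun t => if t ≤ T then 0 else ⊤

/-- Window function `I_w`: `w` at `t = 0`, `+∞` for `t > 0` (and `0` for `t < 0`). -/
def wndw (w : ℝ≥0∞) : ℝ → ℝ≥0∞ := fun t => if t < 0 then 0 else if t = 0 then w else ⊤

/-- Token-bucket curve `γ_{b,r}`: `b + r·t` for `t > 0`, `0` for `t ≤ 0`. -/
def tbkt (b r : ℝ≥0∞) : ℝ → ℝ≥0∞ := fun t => if t ≤ 0 then 0 else b + r * ENNReal.ofReal t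

/-- Min-plus convolution `(f ⊗ g)(t) = inf_{0 ≤ u ≤ t} (f(t − u) + g(u))` for `t ≥ 0`,
extended by `0` on negative times. -/
def mconv (f g : ℝ → ℝ≥0∞) : ℝ → ℝ≥0∞ :=
  fun t => if t < 0 then 0 else ⨅ u ∈ Set.Icc (0 : ℝ) t, (f (t - u) + g u)

/-- The basic MSLC building block `(δ_τ ⊗ I_σ ⊗ γ_{0,ρ}) ∧ δ_0`. -/
def mslcStep (τ : ℝ) (σ ρ : ℝ≥0∞) : ℝ → ℝ≥0∞ :=
  mconv (mconv (bdelay τ) (wndw σ)) (tbkt 0 ρ) ⊓ bdelay 0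

/-- Horizontal deviation (delay bound):
`hdev(α, β) = sup_{t ≥ 0} inf { d ≥ 0 : α(t − d) ≤ β(t) }`. -/
def hdev (α β : ℝ → ℝ≥0∞) : ℝ≥0∞ :=
  ⨆ t ∈ Set.Ici (0 : ℝ), ⨅ d ∈ {d : ℝ | 0 ≤ d ∧ α (t - d) ≤ β t}, ENNReal.ofReal d

/-- Vertical deviation (backlog bound): `vdev(α, β) = sup_{u ≥ 0} (α(u) − β(u))`
with truncated subtraction (so `x − (+∞) = 0`). -/
def vdev (α β : ℝ → ℝ≥0∞) : ℝ≥0∞ :=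
  ⨆ u ∈ Set.Ici (0 : ℝ), (α u - β u)

/-- Min-plus deconvolution `(f ⊘ g)(t) = sup_{u ≥ 0} (f(t + u) − g(u))`. -/
def mdeconv (f g : ℝ → ℝ≥0∞) : ℝ → ℝ≥0∞ :=
  fun t => ⨆ u ∈ Set.Ici (0 : ℝ), (f (t + u) - g u)

/-- FIFO leftover `(β ⊖_θ α)(t) = [β(t) − α(t − θ)]⁺` for `t > θ`, `0` for `t ≤ θ`. -/
def leftover (β α : ℝ → ℝ≥0∞) (θ : ℝ) : ℝ → ℝ≥0∞ :=
  fun t => if t ≤ θ then 0 else β t - α (t - θ)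

/-- Nondecreasing lower bound `f↑(t) = inf_{u ≥ t} f(u)`. -/
def ndlb (f : ℝ → ℝ≥0∞) : ℝ → ℝ≥0∞ := fun t => ⨅ u ∈ Set.Ici t, f u


/-- Closed form of a single MSLC step. -/
def stepF (τ : ℝ) (σ ρ : ℝ≥0∞) : ℝ → ℝ≥0∞ := fun t =>
  if t ≤ 0 then 0 else if t ≤ τ then σ else σ + ρ * ENNReal.ofReal (t - τ)

lemma conv1 (τ : ℝ) (σ : ℝ≥0∞) :
    mconv (bdelay τ) (wndw σ) = fun t =>
      if t < 0 then 0 else if t ≤ τ then σ else ⊤ := by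
  funext t
  simp only [mconv]
  by_cases ht : t < 0
  · simp [ht]
  rw [if_neg ht, if_neg ht]
  push_neg at ht
  apply le_antisymm
  · have h0 : (0:ℝ) ∈ Set.Icc (0:ℝ) t := ⟨le_refl _, ht⟩
    refine le_trans (iInf₂_le (0:ℝ) h0) ?_
    simp only [sub_zero, wndw, bdelay]
    split_ifs with h1 <;> simp
  · refine le_iInf₂ fun u hu => ?_
    have hu' := Set.mem_Icc.mp hu
    rcases eq_or_lt_of_le hu'.1 with h | h
    · subst h
      simp only [sub_zero, wndw, lt_irrefl, if_neg (lt_irrefl _), if_pos rfl, bdelay]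
      split_ifs with h1 <;> simp_all
    · have : wndw σ u = ⊤ := by
        simp [wndw, not_lt.mpr (le_of_lt h), ne_of_gt h]
      rw [this]
      simp

lemma conv2 (τ : ℝ) (hτ : 0 ≤ τ) (σ ρ : ℝ≥0∞) :
    mconv (fun t => if t < 0 then 0 else if t ≤ τ then σ else ⊤) (tbkt 0 ρ)
      = fun t => if t ≤ 0 then (if t < 0 then 0 else σ)
          else if t ≤ τ then σ else σ + ρ * ENNReal.ofReal (t - τ) := by
  funext t
  simp only [mconv]
  by_cases ht : t < 0
  · simp [ht, le_of_lt ht]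
  rw [if_neg ht]
  push_neg at ht
  by_cases htτ : t ≤ τ
  · have hrhs : (if t ≤ 0 then (if t < 0 then (0:ℝ≥0∞) else σ)
        else if t ≤ τ then σ else σ + ρ * ENNReal.ofReal (t - τ)) = σ := by
      split_ifs <;> first | rfl | linarith
    rw [hrhs]
    apply le_antisymm
    · have h0 : (0:ℝ) ∈ Set.Icc (0:ℝ) t := ⟨le_refl _, ht⟩
      refine le_trans (iInf₂_le (0:ℝ) h0) ?_
      simp [tbkt, sub_zero, not_lt.mpr ht, htτ]
    · refine le_iInf₂ fun u hu => ?_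
      have hu' := Set.mem_Icc.mp hu
      have h1 : ¬ (t - u < 0) := not_lt.mpr (sub_nonneg.mpr hu'.2)
      have h2 : σ ≤ (if t - u < 0 then (0:ℝ≥0∞) else if t - u ≤ τ then σ else ⊤) := by
        rw [if_neg h1]; split_ifs <;> simp
      exact le_trans h2 le_self_add
  · push_neg at htτ
    have hrhs : (if t ≤ 0 then (if t < 0 then (0:ℝ≥0∞) else σ)
        else if t ≤ τ then σ else σ + ρ * ENNReal.ofReal (t - τ))
        = σ + ρ * ENNReal.ofReal (t - τ) := by
      have : ¬ t ≤ 0 := not_le.mpr (lt_of_le_of_lt hτ htτ)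
      simp [this, not_le.mpr htτ]
    rw [hrhs]
    apply le_antisymm
    · have hu0 : t - τ ∈ Set.Icc (0:ℝ) t := by
        constructor <;> [linarith; linarith]
      refine le_trans (iInf₂_le (t - τ) hu0) ?_
      have h1 : t - (t - τ) = τ := by ring
      have h2 : ¬ (t - τ ≤ 0) := by linarith
      simp [h1, tbkt, h2, not_lt.mpr hτ]
    · refine le_iInf₂ fun u hu => ?_
      have hu' := Set.mem_Icc.mp hu
      have h2 : ¬ (t - u < 0) := not_lt.mpr (sub_nonneg.mpr hu'.2)
      by_cases h1 : t - u ≤ τ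
      · have h3 : ¬ (u ≤ 0) := by
          intro h; exact h1.not_gt (by linarith [htτ])
        rw [if_neg h2, if_pos h1]
        simp only [tbkt, if_neg h3, zero_add]
        refine add_le_add_right ?_ σ
        exact mul_le_mul_right (ENNReal.ofReal_le_ofReal (by linarith)) ρ
      · rw [if_neg h2, if_neg h1]
        simp

lemma mslcStep_eq (τ : ℝ) (hτ : 0 ≤ τ) (σ ρ : ℝ≥0∞) :
    mslcStep τ σ ρ = stepF τ σ ρ := by
  funext t
  simp only [mslcStep, Pi.inf_apply, conv1, conv2 τ hτ, stepF, bdelay]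
  by_cases h0 : t ≤ 0
  · simp [h0]
  · push_neg at h0
    rw [if_neg (not_le.mpr h0), if_neg (not_le.mpr h0), if_neg (not_le.mpr h0)]
    split_ifs <;> simp

lemma stepF_nonpos (τ : ℝ) (σ ρ : ℝ≥0∞) {t : ℝ} (ht : t ≤ 0) : stepF τ σ ρ t = 0 := by
  simp [stepF, ht]

lemma stepF_zero (τ : ℝ) (σ ρ : ℝ≥0∞) : stepF τ σ ρ 0 = 0 := stepF_nonpos τ σ ρ le_rfl

lemma stepF_self_le (τ : ℝ) (σ ρ : ℝ≥0∞) {t : ℝ} (ht : t ≤ τ) : stepF τ σ ρ t ≤ σ := by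
  simp only [stepF]; split_ifs <;> simp

lemma le_stepF_of_pos (τ : ℝ) (σ ρ : ℝ≥0∞) {t : ℝ} (ht : 0 < t) : σ ≤ stepF τ σ ρ t := by
  simp only [stepF, if_neg (not_le.mpr ht)]
  split_ifs <;> simp

lemma stepF_of_mid (τ : ℝ) (σ ρ : ℝ≥0∞) {t : ℝ} (h0 : 0 < t) (ht : t ≤ τ) :
    stepF τ σ ρ t = σ := by
  simp [stepF, not_le.mpr h0, ht]

lemma stepF_of_gt (τ : ℝ) (hτ : 0 ≤ τ) (σ ρ : ℝ≥0∞) {t : ℝ} (ht : τ < t) :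
    stepF τ σ ρ t = σ + ρ * ENNReal.ofReal (t - τ) := by
  have : ¬ t ≤ 0 := not_le.mpr (lt_of_le_of_lt hτ ht)
  simp [stepF, this, not_le.mpr ht]


lemma conv_step (τ₁ τ₂ : ℝ) (h1 : 0 ≤ τ₁) (h2 : 0 ≤ τ₂) (σ₁ σ₂ ρ₁ ρ₂ : ℝ≥0∞) :
    mconv (stepF τ₁ σ₁ ρ₁) (stepF τ₂ σ₂ ρ₂)
      = stepF τ₁ σ₁ ρ₁ ⊓ stepF τ₂ σ₂ ρ₂ ⊓ stepF (τ₁+τ₂) (σ₁+σ₂) ρ₁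
        ⊓ stepF (τ₁+τ₂) (σ₁+σ₂) ρ₂ := by
  funext t
  simp only [Pi.inf_apply]
  by_cases ht : t < 0
  · simp [mconv, ht, stepF_nonpos _ _ _ ht.le]
  push_neg at ht
  simp only [mconv, if_neg (not_lt.mpr ht)]
  apply le_antisymm
  · refine le_inf (le_inf (le_inf ?_ ?_) ?_) ?_
    · refine le_trans (iInf₂_le 0 (Set.mem_Icc.mpr ⟨le_refl _, ht⟩)) ?_
      rw [sub_zero, stepF_zero, add_zero]
    · refine le_trans (iInf₂_le t (Set.mem_Icc.mpr ⟨ht, le_refl _⟩)) ?_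
      rw [sub_self, stepF_zero, zero_add]
    · -- ≤ h₁ t
      by_cases htτ : t ≤ τ₂
      · refine le_trans (iInf₂_le t (Set.mem_Icc.mpr ⟨ht, le_refl _⟩)) ?_
        rw [sub_self, stepF_zero, zero_add]
        rcases eq_or_lt_of_le ht with h | h
        · rw [← h]; simp [stepF_zero]
        · rw [stepF_of_mid _ _ _ h htτ, stepF_of_mid _ _ _ h (by linarith)]
          exact le_add_self
      · push_neg at htτ
        refine le_trans (iInf₂_le τ₂ (Set.mem_Icc.mpr ⟨h2, htτ.le⟩)) ?_
        have hg : stepF τ₂ σ₂ ρ₂ τ₂ ≤ σ₂ := stepF_self_le _ _ _ le_rfl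
        by_cases h3 : t - τ₂ ≤ τ₁
        · rw [stepF_of_mid τ₁ σ₁ ρ₁ (by linarith) h3,
              stepF_of_mid (τ₁+τ₂) _ _ (by linarith) (by linarith)]
          exact add_le_add_right hg σ₁
        · push_neg at h3
          rw [stepF_of_gt τ₁ h1 _ _ h3, stepF_of_gt (τ₁+τ₂) (by linarith) _ _ (by linarith)]
          have he : t - τ₂ - τ₁ = t - (τ₁ + τ₂) := by ring
          rw [he]
          refine le_trans (add_le_add_right hg _) (le_of_eq ?_)
          ring
    · -- ≤ h₂ t
      by_cases htτ : t ≤ τ₁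
      · refine le_trans (iInf₂_le 0 (Set.mem_Icc.mpr ⟨le_refl _, ht⟩)) ?_
        rw [sub_zero, stepF_zero, add_zero]
        rcases eq_or_lt_of_le ht with h | h
        · rw [← h]; simp [stepF_zero]
        · rw [stepF_of_mid _ _ _ h htτ, stepF_of_mid _ _ _ h (by linarith)]
          exact le_self_add
      · push_neg at htτ
        refine le_trans (iInf₂_le (t - τ₁)
          (Set.mem_Icc.mpr ⟨by linarith, by linarith⟩)) ?_
        have he : t - (t - τ₁) = τ₁ := by ring
        rw [he]
        have hf : stepF τ₁ σ₁ ρ₁ τ₁ ≤ σ₁ := stepF_self_le _ _ _ le_rfl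
        by_cases h3 : t - τ₁ ≤ τ₂
        · rw [stepF_of_mid τ₂ σ₂ ρ₂ (by linarith) h3,
              stepF_of_mid (τ₁+τ₂) _ _ (by linarith) (by linarith)]
          exact add_le_add_left hf σ₂
        · push_neg at h3
          rw [stepF_of_gt τ₂ h2 _ _ h3, stepF_of_gt (τ₁+τ₂) (by linarith) _ _ (by linarith)]
          have he2 : t - τ₁ - τ₂ = t - (τ₁ + τ₂) := by ring
          rw [he2]
          refine le_trans (add_le_add_left hf _) (le_of_eq ?_)
          ring
  · refine le_iInf₂ fun u hu => ?_
    have hu' := Set.mem_Icc.mp hu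
    by_cases hu0 : u ≤ 0
    · have hz : u = 0 := le_antisymm hu0 hu'.1
      subst hz
      rw [sub_zero, stepF_zero, add_zero]
      exact inf_le_left.trans (inf_le_left.trans inf_le_left)
    push_neg at hu0
    by_cases hut : t ≤ u
    · have hz : u = t := le_antisymm hu'.2 hut
      subst hz
      rw [sub_self, stepF_zero, zero_add]
      exact inf_le_left.trans (inf_le_left.trans inf_le_right)
    push_neg at hut
    have hf1 : σ₁ ≤ stepF τ₁ σ₁ ρ₁ (t - u) := le_stepF_of_pos _ _ _ (by linarith)
    have hg1 : σ₂ ≤ stepF τ₂ σ₂ ρ₂ u := le_stepF_of_pos _ _ _ hu0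
    by_cases hT : t ≤ τ₁ + τ₂
    · refine le_trans (inf_le_left.trans inf_le_right) ?_
      rw [stepF_of_mid _ _ _ (by linarith) hT]
      exact add_le_add hf1 hg1
    · push_neg at hT
      by_cases hA : t - u ≤ τ₁
      · have hu2 : τ₂ < u := by linarith
        refine le_trans inf_le_right ?_
        rw [stepF_of_gt (τ₁+τ₂) (by linarith) _ _ hT, stepF_of_gt τ₂ h2 _ _ hu2]
        have hXY : ENNReal.ofReal (t - (τ₁ + τ₂)) ≤ ENNReal.ofReal (u - τ₂) :=
          ENNReal.ofReal_le_ofReal (by linarith)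
        calc σ₁ + σ₂ + ρ₂ * ENNReal.ofReal (t - (τ₁ + τ₂))
            ≤ σ₁ + σ₂ + ρ₂ * ENNReal.ofReal (u - τ₂) :=
              add_le_add_right (mul_le_mul_right hXY ρ₂) _
          _ = σ₁ + (σ₂ + ρ₂ * ENNReal.ofReal (u - τ₂)) := by ring
          _ ≤ stepF τ₁ σ₁ ρ₁ (t - u) + (σ₂ + ρ₂ * ENNReal.ofReal (u - τ₂)) :=
              add_le_add_left hf1 _
      · push_neg at hA
        by_cases hB : u ≤ τ₂
        · refine le_trans (inf_le_left.trans inf_le_right) ?_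
          rw [stepF_of_gt (τ₁+τ₂) (by linarith) _ _ hT, stepF_of_gt τ₁ h1 _ _ hA]
          have hXY : ENNReal.ofReal (t - (τ₁ + τ₂)) ≤ ENNReal.ofReal (t - u - τ₁) :=
            ENNReal.ofReal_le_ofReal (by linarith)
          calc σ₁ + σ₂ + ρ₁ * ENNReal.ofReal (t - (τ₁ + τ₂))
              ≤ σ₁ + σ₂ + ρ₁ * ENNReal.ofReal (t - u - τ₁) :=
                add_le_add_right (mul_le_mul_right hXY ρ₁) _
            _ = (σ₁ + ρ₁ * ENNReal.ofReal (t - u - τ₁)) + σ₂ := by ring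
            _ ≤ (σ₁ + ρ₁ * ENNReal.ofReal (t - u - τ₁)) + stepF τ₂ σ₂ ρ₂ u :=
                add_le_add_right hg1 _
        · push_neg at hB
          rw [stepF_of_gt τ₁ h1 _ _ hA, stepF_of_gt τ₂ h2 _ _ hB]
          set a := ENNReal.ofReal (t - u - τ₁) with ha
          set b := ENNReal.ofReal (u - τ₂) with hb
          have hab : a + b = ENNReal.ofReal (t - (τ₁ + τ₂)) := by
            rw [ha, hb, ← ENNReal.ofReal_add (by linarith) (by linarith)]
            ring_nf
          rcases le_total ρ₁ ρ₂ with hρ | hρ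
          · refine le_trans (inf_le_left.trans inf_le_right) ?_
            rw [stepF_of_gt (τ₁+τ₂) (by linarith) _ _ hT, ← hab]
            calc σ₁ + σ₂ + ρ₁ * (a + b)
                = σ₁ + σ₂ + (ρ₁ * a + ρ₁ * b) := by rw [mul_add]
              _ ≤ σ₁ + σ₂ + (ρ₁ * a + ρ₂ * b) :=
                  add_le_add_right (add_le_add_right (mul_le_mul_left hρ b) _) _
              _ = (σ₁ + ρ₁ * a) + (σ₂ + ρ₂ * b) := by ring
          · refine le_trans inf_le_right ?_
            rw [stepF_of_gt (τ₁+τ₂) (by linarith) _ _ hT, ← hab]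
            calc σ₁ + σ₂ + ρ₂ * (a + b)
                = σ₁ + σ₂ + (ρ₂ * a + ρ₂ * b) := by rw [mul_add]
              _ ≤ σ₁ + σ₂ + (ρ₁ * a + ρ₂ * b) :=
                  add_le_add_right (add_le_add_left (mul_le_mul_left hρ a) _) _
              _ = (σ₁ + ρ₁ * a) + (σ₂ + ρ₂ * b) := by ring

/-- convolution of two single-step MSLC curves. -/
theorem stmt2 (tau1 sig1 tau2 sig2 : ℝ) (htau1 : 0 ≤ tau1) (hsig1 : 0 ≤ sig1)
    (htau2 : 0 ≤ tau2) (hsig2 : 0 ≤ sig2) (rho1 rho2 : ℝ≥0∞) :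
    mconv (mslcStep tau1 (ENNReal.ofReal sig1) rho1) (mslcStep tau2 (ENNReal.ofReal sig2) rho2)
      = mslcStep tau1 (ENNReal.ofReal sig1) rho1 ⊓ mslcStep tau2 (ENNReal.ofReal sig2) rho2
        ⊓ mslcStep (tau1 + tau2) (ENNReal.ofReal sig1 + ENNReal.ofReal sig2) rho1
        ⊓ mslcStep (tau1 + tau2) (ENNReal.ofReal sig1 + ENNReal.ofReal sig2) rho2 := by
  rw [mslcStep_eq _ htau1, mslcStep_eq _ htau2,
    mslcStep_eq _ (add_nonneg htau1 htau2) (ENNReal.ofReal sig1 + ENNReal.ofReal sig2) rho1,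
    mslcStep_eq _ (add_nonneg htau1 htau2) (ENNReal.ofReal sig1 + ENNReal.ofReal sig2) rho2]
  exact conv_step tau1 tau2 htau1 htau2 _ _ _ _
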